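/- Suppose $q:S^1\setminus\{t_*\}\to(0,\infty)$ is $C^1$ with $q(t)\to 0$ as $t\to t_*$, and the Kepler energy $E(t) = \dot q(t)^2/2 - N/q(t)$ (with $N>0$) extends to a continuous function on $S^1$. Then $\lim_{t\to t_*} s_*(t)\sqrt{q(t)}\,\dot q(t) = \sqrt{2N}$, where $s_*(t)=-1$ for $t<t_*$ and $s_*(t)=+1$ for $t>t_*$ (locally near $t_*$). -/
import Mathlib


open Filter Topology

/-- A continuous nonvanishing function on a preconnected set has constant sign. -/
lemma sign_const_aux {f : ℝ → ℝ} {s : Set ℝ} (hf : ContinuousOn f s)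
    (hs : IsPreconnected s) (hne : ∀ x ∈ s, f x ≠ 0) {x y : ℝ}
    (hx : x ∈ s) (hy : y ∈ s) (hfx : f x < 0) : f y < 0 := by
  by_contra h
  push_neg at h
  obtain ⟨z, hz, hz0⟩ := hs.intermediate_value₂ hx hy hf continuousOn_const hfx.le h
  exact hne z hz hz0

/-- Suppose `q` is positive and `C¹` away from `t⋆` with `q(t) → 0` as
`t → t⋆`, and the Kepler energy `E = q̇²/2 - N/q` (with `N > 0`) extends
continuously over `t⋆`. Then `s⋆(t)·√(q(t))·q̇(t) → √(2N)` as `t → t⋆`,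
where `s⋆ = -1` before `t⋆` and `+1` after. -/
theorem stmt_16 (N tstar : ℝ) (hN : 0 < N) (q q' : ℝ → ℝ)
    (hpos : ∀ t ≠ tstar, 0 < q t)
    (hderiv : ∀ t ≠ tstar, HasDerivAt q (q' t) t)
    (hq'cont : ContinuousOn q' {t | t ≠ tstar})
    (hq0 : Tendsto q (𝓝[≠] tstar) (𝓝 0))
    (hE : ∃ E₀ : ℝ,
      Tendsto (fun t => q' t ^ 2 / 2 - N / q t) (𝓝[≠] tstar) (𝓝 E₀)) :
    Tendsto
      (fun t => (if t < tstar then (-1:ℝ) else 1) * Real.sqrt (q t) * q' t)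
      (𝓝[≠] tstar) (𝓝 (Real.sqrt (2 * N))) := by
  obtain ⟨E₀, hE⟩ := hE
  -- Step 1: q * q'^2 → 2N
  have h1 : Tendsto (fun t => q t * q' t ^ 2) (𝓝[≠] tstar) (𝓝 (2 * N)) := by
    have hmul : Tendsto (fun t => 2 * q t * (q' t ^ 2 / 2 - N / q t) + 2 * N)
        (𝓝[≠] tstar) (𝓝 (2 * 0 * E₀ + 2 * N)) :=
      (((tendsto_const_nhds.mul hq0).mul hE).add tendsto_const_nhds)
    rw [show (2:ℝ) * 0 * E₀ + 2 * N = 2 * N by ring] at hmul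
    refine hmul.congr' ?_
    filter_upwards [self_mem_nhdsWithin] with t ht
    have hq : q t ≠ 0 := (hpos t ht).ne'
    field_simp
    ring
  -- Step 2: |√q * q'| → √(2N)
  have habs : Tendsto (fun t => |Real.sqrt (q t) * q' t|) (𝓝[≠] tstar)
      (𝓝 (Real.sqrt (2 * N))) := by
    have := (Real.continuous_sqrt.tendsto (2 * N)).comp h1
    refine this.congr' ?_
    filter_upwards [self_mem_nhdsWithin] with t ht
    have hq : 0 ≤ q t := (hpos t ht).le
    simp only [Function.comp]
    rw [Real.sqrt_mul hq, Real.sqrt_sq_eq_abs, abs_mul,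
      abs_of_nonneg (Real.sqrt_nonneg _)]
  -- Step 3: q' ≠ 0 in a punctured neighborhood
  have hev : ∀ᶠ t in 𝓝[≠] tstar, N < q t * q' t ^ 2 :=
    h1.eventually (eventually_gt_nhds (by linarith))
  rw [eventually_nhdsWithin_iff, Metric.eventually_nhds_iff] at hev
  obtain ⟨δ, hδ, hδ'⟩ := hev
  have hq'ne : ∀ t, dist t tstar < δ → t ≠ tstar → q' t ≠ 0 := by
    intro t h1' h2' h3'
    have := hδ' h1' h2'
    rw [h3'] at this
    simp at this
    linarith
  -- Right side: q' > 0 on Ioo tstar (tstar+δ)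
  have hsubR : Set.Ioo tstar (tstar + δ) ⊆ {t | t ≠ tstar} :=
    fun x hx => ne_of_gt hx.1
  have hdistR : ∀ x ∈ Set.Ioo tstar (tstar + δ), dist x tstar < δ := by
    intro x hx
    rw [Real.dist_eq, abs_of_pos (by linarith [hx.1] : (0:ℝ) < x - tstar)]
    linarith [hx.2]
  have hright : ∀ t ∈ Set.Ioo tstar (tstar + δ), 0 < q' t := by
    intro t ht
    by_contra hc
    push_neg at hc
    have hqt0 : q' t < 0 := lt_of_le_of_ne hc (hq'ne t (hdistR t ht) (ne_of_gt ht.1))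
    have hcontOn : ContinuousOn q' (Set.Ioo tstar (tstar + δ)) :=
      hq'cont.mono hsubR
    have hneg : ∀ x ∈ Set.Ioo tstar (tstar + δ), q' x < 0 := fun x hx =>
      sign_const_aux hcontOn isPreconnected_Ioo
        (fun y hy => hq'ne y (hdistR y hy) (ne_of_gt hy.1)) ht hx hqt0
    have hqc : ContinuousOn q (Set.Ioo tstar (tstar + δ)) := fun x hx =>
      ((hderiv x (ne_of_gt hx.1)).continuousAt).continuousWithinAt
    have hanti : StrictAntiOn q (Set.Ioo tstar (tstar + δ)) := by
      refine strictAntiOn_of_deriv_neg (convex_Ioo _ _) hqc ?_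
      intro x hx
      rw [interior_Ioo] at hx
      rw [(hderiv x (ne_of_gt hx.1)).deriv]
      exact hneg x hx
    have hqtpos : 0 < q t := hpos t (ne_of_gt ht.1)
    have h2 : ∀ᶠ u in 𝓝[>] tstar, q u < q t :=
      (hq0.mono_left (nhdsWithin_mono _ fun x hx => ne_of_gt hx)).eventually
        (eventually_lt_nhds hqtpos)
    have h3 : Set.Ioo tstar t ∈ 𝓝[>] tstar := Ioo_mem_nhdsGT_of_mem ⟨le_refl _, ht.1⟩
    obtain ⟨u, hu1, hu2⟩ := (h2.and (eventually_mem_set.mpr h3)).exists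
    have : q t < q u := hanti ⟨hu2.1, hu2.2.trans ht.2⟩ ht hu2.2
    linarith
  -- Left side: q' < 0 on Ioo (tstar-δ) tstar
  have hsubL : Set.Ioo (tstar - δ) tstar ⊆ {t | t ≠ tstar} :=
    fun x hx => ne_of_lt hx.2
  have hdistL : ∀ x ∈ Set.Ioo (tstar - δ) tstar, dist x tstar < δ := by
    intro x hx
    rw [Real.dist_eq, abs_of_neg (by linarith [hx.2] : x - tstar < 0)]
    linarith [hx.1]
  have hleft : ∀ t ∈ Set.Ioo (tstar - δ) tstar, q' t < 0 := by
    intro t ht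
    by_contra hc
    push_neg at hc
    have hqt0 : 0 < q' t :=
      lt_of_le_of_ne hc (Ne.symm (hq'ne t (hdistL t ht) (ne_of_lt ht.2)))
    have hcontOn : ContinuousOn q' (Set.Ioo (tstar - δ) tstar) :=
      hq'cont.mono hsubL
    have hposq' : ∀ x ∈ Set.Ioo (tstar - δ) tstar, 0 < q' x := by
      intro x hx
      by_contra hcx
      push_neg at hcx
      have hx0 : q' x < 0 := lt_of_le_of_ne hcx (hq'ne x (hdistL x hx) (ne_of_lt hx.2))
      have := sign_const_aux hcontOn isPreconnected_Ioo
        (fun y hy => hq'ne y (hdistL y hy) (ne_of_lt hy.2)) hx ht hx0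
      linarith
    have hqc : ContinuousOn q (Set.Ioo (tstar - δ) tstar) := fun x hx =>
      ((hderiv x (ne_of_lt hx.2)).continuousAt).continuousWithinAt
    have hmono : StrictMonoOn q (Set.Ioo (tstar - δ) tstar) := by
      refine strictMonoOn_of_deriv_pos (convex_Ioo _ _) hqc ?_
      intro x hx
      rw [interior_Ioo] at hx
      rw [(hderiv x (ne_of_lt hx.2)).deriv]
      exact hposq' x hx
    have hqtpos : 0 < q t := hpos t (ne_of_lt ht.2)
    have h2 : ∀ᶠ u in 𝓝[<] tstar, q u < q t :=
      (hq0.mono_left (nhdsWithin_mono _ fun x hx => ne_of_lt hx)).eventually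
        (eventually_lt_nhds hqtpos)
    have h3 : Set.Ioo t tstar ∈ 𝓝[<] tstar := Ioo_mem_nhdsLT_of_mem ⟨ht.2, le_refl _⟩
    obtain ⟨u, hu1, hu2⟩ := (h2.and (eventually_mem_set.mpr h3)).exists
    have : q t < q u := hmono ht ⟨ht.1.trans hu2.1, hu2.2⟩ hu2.1
    linarith
  -- Step 4: conclude
  refine habs.congr' ?_
  have hball : ∀ᶠ t in 𝓝[≠] tstar, dist t tstar < δ := by
    rw [eventually_nhdsWithin_iff]
    exact Metric.eventually_nhds_iff.mpr ⟨δ, hδ, fun y hy _ => hy⟩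
  filter_upwards [self_mem_nhdsWithin, hball] with t ht hd
  rcases lt_or_gt_of_ne (ht : t ≠ tstar) with h | h
  · have htI : t ∈ Set.Ioo (tstar - δ) tstar := by
      constructor
      · rw [Real.dist_eq, abs_of_neg (by linarith : t - tstar < 0)] at hd
        linarith
      · exact h
    have hq' : q' t < 0 := hleft t htI
    rw [if_pos h, abs_of_nonpos (mul_nonpos_of_nonneg_of_nonpos (Real.sqrt_nonneg _) hq'.le)]
    ring
  · have htI : t ∈ Set.Ioo tstar (tstar + δ) := by
      refine ⟨h, ?_⟩
      rw [Real.dist_eq, abs_of_pos (by linarith : 0 < t - tstar)] at hd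
      linarith
    have hq' : 0 < q' t := hright t htI
    rw [if_neg (not_lt.mpr h.le),
      abs_of_nonneg (mul_nonneg (Real.sqrt_nonneg _) hq'.le)]
    ring
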